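/- Let Q be a quiver with finite vertex set V, let R₁ ⊂ V be a nonempty proper subset and R₂ = V ∖ R₁. Let θ₀ : V → ℝ be a stability parameter that is generic on the wall W_{R₁}, i.e. θ₀(χ_{R₁}) = 0 and for every nonempty proper subset R ⊂ V with θ₀(χ_R) = 0 one has R = R₁ or R = R₂. Let S and Q' be θ₀-stable representations of Q over ℂ with dimension vectors χ_{R₁} and χ_{R₂} respectively. Let θ : V → ℝ be a stability parameter with θ(χ_{R₁}) > 0 and such that θ(χ_R) > 0 for every nonempty proper subset R ⊂ V with θ₀(χ_R) > 0. Then for every short exact sequence of representations 0 → S → E → Q' → 0 that does not split, the representation E (which has dimension vector (1,…,1)) is θ-stable. -/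

import Mathlib

private lemma bot_or_top' {W : Type} [AddCommGroup W] [Module ℂ W] [FiniteDimensional ℂ W]
    (h : Module.finrank ℂ W = 1) (N : Submodule ℂ W) : N = ⊥ ∨ N = ⊤ := by
  rcases Nat.le_one_iff_eq_zero_or_eq_one.mp (h ▸ N.finrank_le) with h0 | h1
  · exact Or.inl (Submodule.finrank_eq_zero.mp h0)
  · exact Or.inr (Submodule.eq_top_of_finrank_eq (h1.trans h.symm))
/-- `N` is a subrepresentation of the representation `(M, ψ)` of the quiver with
arrows `a : Ar` having source `s a` and target `t a`. -/
def IsSubrep {V Ar : Type} (s t : Ar → V)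
    (M : V → Type) [∀ v, AddCommGroup (M v)] [∀ v, Module ℂ (M v)]
    (ψ : ∀ a, M (s a) →ₗ[ℂ] M (t a))
    (N : ∀ v, Submodule ℂ (M v)) : Prop :=
  ∀ a : Ar, ∀ x ∈ N (s a), ψ a x ∈ N (t a)

/-- `θ(N) = ∑_{v ∈ V} θ(v) · dim N_v`. -/
noncomputable def thetaVal {V : Type} [Fintype V] (θ : V → ℝ)
    {M : V → Type} [∀ v, AddCommGroup (M v)] [∀ v, Module ℂ (M v)]
    (N : ∀ v, Submodule ℂ (M v)) : ℝ :=
  ∑ v, θ v * (Module.finrank ℂ (N v) : ℝ)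

/-- Let `θ₀` be a stability parameter generic on the wall `W_{R₁}`, let `S` and
`Q'` be `θ₀`-stable representations of dimension vectors `χ_{R₁}` and `χ_{R₂}`
(`R₂ = V ∖ R₁`), and let `θ` be a stability parameter with `θ(χ_{R₁}) > 0` which
is positive on every characteristic function on which `θ₀` is positive.  Then
every non-split extension `0 → S → E → Q' → 0` yields a `θ`-stable
representation `E` of dimension vector `(1,…,1)`. -/
theorem nonsplit_extension_is_stable
    {V Ar : Type} [Fintype V] [DecidableEq V] (s t : Ar → V)
    (R₁ : Finset V) (hR₁ne : R₁.Nonempty) (hR₁prop : R₁ ≠ Finset.univ)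
    (θ₀ θ : V → ℝ)
    (hθ₀sum : ∑ v, θ₀ v = 0)
    (hθ₀wall : ∑ v ∈ R₁, θ₀ v = 0)
    (hθ₀gen : ∀ R : Finset V, R.Nonempty → R ≠ Finset.univ →
      ∑ v ∈ R, θ₀ v = 0 → R = R₁ ∨ R = R₁ᶜ)
    (hθsum : ∑ v, θ v = 0)
    (hθR₁ : 0 < ∑ v ∈ R₁, θ v)
    (hθadj : ∀ R : Finset V, R.Nonempty → R ≠ Finset.univ →
      0 < ∑ v ∈ R, θ₀ v → 0 < ∑ v ∈ R, θ v)
    (MS ME MQ : V → Type)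
    [∀ v, AddCommGroup (MS v)] [∀ v, Module ℂ (MS v)]
    [∀ v, FiniteDimensional ℂ (MS v)]
    [∀ v, AddCommGroup (ME v)] [∀ v, Module ℂ (ME v)]
    [∀ v, FiniteDimensional ℂ (ME v)]
    [∀ v, AddCommGroup (MQ v)] [∀ v, Module ℂ (MQ v)]
    [∀ v, FiniteDimensional ℂ (MQ v)]
    (ψS : ∀ a, MS (s a) →ₗ[ℂ] MS (t a))
    (ψE : ∀ a, ME (s a) →ₗ[ℂ] ME (t a))
    (ψQ : ∀ a, MQ (s a) →ₗ[ℂ] MQ (t a))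
    (hSdim : ∀ v, Module.finrank ℂ (MS v) = if v ∈ R₁ then 1 else 0)
    (hQdim : ∀ v, Module.finrank ℂ (MQ v) = if v ∈ R₁ then 0 else 1)
    (hSstable : ∀ N : ∀ v, Submodule ℂ (MS v), IsSubrep s t MS ψS N →
      (∃ v, N v ≠ ⊥) → (∃ v, N v ≠ ⊤) → 0 < thetaVal θ₀ N)
    (hQstable : ∀ N : ∀ v, Submodule ℂ (MQ v), IsSubrep s t MQ ψQ N →
      (∃ v, N v ≠ ⊥) → (∃ v, N v ≠ ⊤) → 0 < thetaVal θ₀ N)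
    (i : ∀ v, MS v →ₗ[ℂ] ME v) (p : ∀ v, ME v →ₗ[ℂ] MQ v)
    (hi : ∀ (a : Ar) (x : MS (s a)), i (t a) (ψS a x) = ψE a (i (s a) x))
    (hp : ∀ (a : Ar) (x : ME (s a)), p (t a) (ψE a x) = ψQ a (p (s a) x))
    (hiinj : ∀ v, Function.Injective (i v))
    (hpsurj : ∀ v, Function.Surjective (p v))
    (hexact : ∀ v, LinearMap.ker (p v) = LinearMap.range (i v))
    (hnonsplit : ¬ ∃ σ : ∀ v, MQ v →ₗ[ℂ] ME v,
      (∀ (a : Ar) (x : MQ (s a)), σ (t a) (ψQ a x) = ψE a (σ (s a) x)) ∧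
      ∀ v, (p v).comp (σ v) = LinearMap.id) :
    (∀ v, Module.finrank ℂ (ME v) = 1) ∧
    ∀ N : ∀ v, Submodule ℂ (ME v), IsSubrep s t ME ψE N →
      (∃ v, N v ≠ ⊥) → (∃ v, N v ≠ ⊤) → 0 < thetaVal θ N := by
  classical
  have hEdim : ∀ v, Module.finrank ℂ (ME v) = 1 := by
    intro v
    have h1 := LinearMap.finrank_range_add_finrank_ker (p v)
    rw [LinearMap.range_eq_top.mpr (hpsurj v), finrank_top, hexact v,
      LinearMap.finrank_range_of_inj (hiinj v), hSdim v, hQdim v] at h1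
    rw [← h1]; by_cases hv : v ∈ R₁ <;> simp [hv]
  refine ⟨hEdim, ?_⟩
  intro N hN hNbot hNtop
  have hSsub : ∀ v, v ∉ R₁ → Subsingleton (MS v) := fun v hv =>
    Module.finrank_zero_iff.mp (by rw [hSdim v, if_neg hv])
  have hQsub : ∀ v, v ∈ R₁ → Subsingleton (MQ v) := fun v hv =>
    Module.finrank_zero_iff.mp (by rw [hQdim v, if_pos hv])
  have hbt : ∀ v, N v = ⊥ ∨ N v = ⊤ := fun v => bot_or_top' (hEdim v) (N v)
  set R : Finset V := Finset.univ.filter (fun v => N v = ⊤) with hRdef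
  have hRmem : ∀ v, v ∈ R ↔ N v = ⊤ := by intro v; simp [hRdef]
  have hdimN : ∀ v, Module.finrank ℂ (N v) = if v ∈ R then 1 else 0 := by
    intro v
    by_cases hv : v ∈ R
    · rw [if_pos hv, (hRmem v).mp hv, finrank_top, hEdim v]
    · rw [if_neg hv, ((hbt v).resolve_right (fun h => hv ((hRmem v).mpr h))), finrank_bot]
  have hsumN : ∀ f : V → ℝ, thetaVal f N = ∑ v ∈ R, f v := by
    intro f
    rw [thetaVal]
    have h1 : ∀ v : V, f v * (Module.finrank ℂ (N v) : ℝ) = if v ∈ R then f v else 0 := by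
      intro v; rw [hdimN v]; by_cases hv : v ∈ R <;> simp [hv]
    rw [Finset.sum_congr rfl (fun v _ => h1 v), Finset.sum_ite_mem, Finset.univ_inter]
  have hRne : R.Nonempty := by
    obtain ⟨v, hv⟩ := hNbot
    exact ⟨v, (hRmem v).mpr ((hbt v).resolve_left hv)⟩
  have hRnu : R ≠ Finset.univ := by
    obtain ⟨v, hv⟩ := hNtop
    intro h
    exact hv ((hRmem v).mp (h ▸ Finset.mem_univ v))
  -- subrepresentations of S and Q
  set NS : ∀ v, Submodule ℂ (MS v) := fun v => (N v).comap (i v) with hNSdef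
  set NQ : ∀ v, Submodule ℂ (MQ v) := fun v => (N v).map (p v) with hNQdef
  have hNSsub : IsSubrep s t MS ψS NS := by
    intro a x hx
    simp only [hNSdef, Submodule.mem_comap] at hx ⊢
    rw [hi a x]
    exact hN a _ hx
  have hNQsub : IsSubrep s t MQ ψQ NQ := by
    rintro a x ⟨y, hy, rfl⟩
    exact ⟨ψE a y, hN a y hy, hp a y⟩
  have hirange : ∀ v, v ∈ R₁ → LinearMap.range (i v) = ⊤ := by
    intro v hv
    apply Submodule.eq_top_of_finrank_eq
    rw [LinearMap.finrank_range_of_inj (hiinj v), hSdim v, if_pos hv, hEdim v]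
  have hNSdim : ∀ v, Module.finrank ℂ (NS v) = if v ∈ R ∩ R₁ then 1 else 0 := by
    intro v
    by_cases hv1 : v ∈ R₁
    · by_cases hv : v ∈ R
      · rw [if_pos (Finset.mem_inter.mpr ⟨hv, hv1⟩)]
        have : NS v = ⊤ := by rw [hNSdef]; simp [(hRmem v).mp hv]
        rw [this, finrank_top, hSdim v, if_pos hv1]
      · rw [if_neg (fun h => hv (Finset.mem_inter.mp h).1)]
        have hb : N v = ⊥ := (hbt v).resolve_right (fun h => hv ((hRmem v).mpr h))
        have : NS v = ⊥ := by
          rw [hNSdef]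
          simp only [hb, Submodule.comap_bot]
          exact LinearMap.ker_eq_bot.mpr (hiinj v)
        rw [this, finrank_bot]
    · rw [if_neg (fun h => hv1 (Finset.mem_inter.mp h).2)]
      have := (NS v).finrank_le
      rw [hSdim v, if_neg hv1] at this
      omega
  have hNQdim : ∀ v, Module.finrank ℂ (NQ v) = if v ∈ R \ R₁ then 1 else 0 := by
    intro v
    by_cases hv1 : v ∈ R₁
    · rw [if_neg (fun h => (Finset.mem_sdiff.mp h).2 hv1)]
      have := (NQ v).finrank_le
      rw [hQdim v, if_pos hv1] at this
      omega
    · by_cases hv : v ∈ R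
      · rw [if_pos (Finset.mem_sdiff.mpr ⟨hv, hv1⟩)]
        have : NQ v = ⊤ := by
          rw [hNQdef]
          simp only [(hRmem v).mp hv, Submodule.map_top]
          exact LinearMap.range_eq_top.mpr (hpsurj v)
        rw [this, finrank_top, hQdim v, if_neg hv1]
      · rw [if_neg (fun h => hv (Finset.mem_sdiff.mp h).1)]
        have hb : N v = ⊥ := (hbt v).resolve_right (fun h => hv ((hRmem v).mpr h))
        have : NQ v = ⊥ := by rw [hNQdef]; simp [hb]
        rw [this, finrank_bot]
  have hsumNS : thetaVal θ₀ NS = ∑ v ∈ R ∩ R₁, θ₀ v := by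
    rw [thetaVal]
    have h1 : ∀ v : V, θ₀ v * (Module.finrank ℂ (NS v) : ℝ) =
        if v ∈ R ∩ R₁ then θ₀ v else 0 := by
      intro v; rw [hNSdim v]; by_cases hv : v ∈ R ∩ R₁ <;> simp [hv]
    rw [Finset.sum_congr rfl (fun v _ => h1 v), Finset.sum_ite_mem, Finset.univ_inter]
  have hsumNQ : thetaVal θ₀ NQ = ∑ v ∈ R \ R₁, θ₀ v := by
    rw [thetaVal]
    have h1 : ∀ v : V, θ₀ v * (Module.finrank ℂ (NQ v) : ℝ) =
        if v ∈ R \ R₁ then θ₀ v else 0 := by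
      intro v; rw [hNQdim v]; by_cases hv : v ∈ R \ R₁ <;> simp [hv]
    rw [Finset.sum_congr rfl (fun v _ => h1 v), Finset.sum_ite_mem, Finset.univ_inter]
  -- strict positivity from stability when the induced subreps are nontrivial and proper
  have haux1 : R ∩ R₁ ≠ ∅ → R ∩ R₁ ≠ R₁ → 0 < ∑ v ∈ R ∩ R₁, θ₀ v := by
    intro h1 h2
    rw [← hsumNS]
    apply hSstable NS hNSsub
    · obtain ⟨v, hv⟩ := Finset.nonempty_iff_ne_empty.mpr h1
      refine ⟨v, fun hb => ?_⟩
      have := hNSdim v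
      rw [if_pos hv, hb, finrank_bot] at this
      omega
    · obtain ⟨v, hv1, hv2⟩ := Finset.exists_of_ssubset
        (lt_of_le_of_ne Finset.inter_subset_right h2)
      refine ⟨v, fun hb => ?_⟩
      have := hNSdim v
      rw [if_neg hv2, hb, finrank_top, hSdim v, if_pos hv1] at this
      omega
  have haux2 : R \ R₁ ≠ ∅ → R \ R₁ ≠ R₁ᶜ → 0 < ∑ v ∈ R \ R₁, θ₀ v := by
    intro h1 h2
    rw [← hsumNQ]
    apply hQstable NQ hNQsub
    · obtain ⟨v, hv⟩ := Finset.nonempty_iff_ne_empty.mpr h1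
      refine ⟨v, fun hb => ?_⟩
      have := hNQdim v
      rw [if_pos hv, hb, finrank_bot] at this
      omega
    · have hsub : R \ R₁ ⊆ R₁ᶜ := fun v hv =>
        Finset.mem_compl.mpr (Finset.mem_sdiff.mp hv).2
      obtain ⟨v, hv1, hv2⟩ := Finset.exists_of_ssubset (lt_of_le_of_ne hsub h2)
      refine ⟨v, fun hb => ?_⟩
      have := hNQdim v
      rw [if_neg hv2, hb, finrank_top, hQdim v, if_neg (Finset.mem_compl.mp hv1)] at this
      omega
  have hcompl0 : ∑ v ∈ R₁ᶜ, θ₀ v = 0 := by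
    have := Finset.sum_add_sum_compl R₁ θ₀
    rw [hθ₀wall, hθ₀sum] at this
    linarith
  have hge1 : 0 ≤ ∑ v ∈ R ∩ R₁, θ₀ v := by
    by_cases h1 : R ∩ R₁ = ∅
    · rw [h1, Finset.sum_empty]
    by_cases h2 : R ∩ R₁ = R₁
    · rw [h2, hθ₀wall]
    exact le_of_lt (haux1 h1 h2)
  have hge2 : 0 ≤ ∑ v ∈ R \ R₁, θ₀ v := by
    by_cases h1 : R \ R₁ = ∅
    · rw [h1, Finset.sum_empty]
    by_cases h2 : R \ R₁ = R₁ᶜ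
    · rw [h2, hcompl0]
    exact le_of_lt (haux2 h1 h2)
  have hsplitsum : ∑ v ∈ R ∩ R₁, θ₀ v + ∑ v ∈ R \ R₁, θ₀ v = ∑ v ∈ R, θ₀ v :=
    Finset.sum_inter_add_sum_sdiff R R₁ θ₀
  rw [hsumN θ]
  by_cases hpos : 0 < ∑ v ∈ R, θ₀ v
  · exact hθadj R hRne hRnu hpos
  -- the wall case : θ₀(χ_R) = 0
  have h0 : ∑ v ∈ R, θ₀ v = 0 := le_antisymm (not_lt.mp hpos) (by linarith)
  have h01 : ∑ v ∈ R ∩ R₁, θ₀ v = 0 := by linarith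
  have h02 : ∑ v ∈ R \ R₁, θ₀ v = 0 := by linarith
  have hcase1 : R ∩ R₁ = ∅ ∨ R ∩ R₁ = R₁ := by
    by_contra h
    push_neg at h
    exact absurd h01 (ne_of_gt (haux1 (Finset.nonempty_iff_ne_empty.mp h.1) h.2))
  have hcase2 : R \ R₁ = ∅ ∨ R \ R₁ = R₁ᶜ := by
    by_contra h
    push_neg at h
    exact absurd h02 (ne_of_gt (haux2 (Finset.nonempty_iff_ne_empty.mp h.1) h.2))
  have hRsplit : (R ∩ R₁) ∪ (R \ R₁) = R := by
    rw [Finset.union_comm]; exact Finset.sdiff_union_inter R R₁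
  rcases hcase1 with h1 | h1 <;> rcases hcase2 with h2 | h2
  · exfalso
    rw [h1, h2, Finset.empty_union] at hRsplit
    exact Finset.nonempty_iff_ne_empty.mp hRne hRsplit.symm
  · -- R = R₁ᶜ : construct a splitting, contradiction
    exfalso
    have hReq : R = R₁ᶜ := by rw [← hRsplit, h1, h2, Finset.empty_union]
    have hNtop' : ∀ v, v ∉ R₁ → N v = ⊤ := fun v hv =>
      (hRmem v).mp (hReq ▸ Finset.mem_compl.mpr hv)
    have hdim0 : ∀ v, v ∈ R₁ → Module.finrank ℂ (N v) = 0 := by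
      intro v hv
      rw [hdimN v, if_neg (fun h => (Finset.mem_compl.mp (hReq ▸ h)) hv)]
    set e : ∀ v, N v →ₗ[ℂ] MQ v := fun v => (p v).comp (N v).subtype with hedef
    have hbij : ∀ v, Function.Bijective (e v) := by
      intro v
      constructor
      · by_cases hv : v ∈ R₁
        · have : Subsingleton (N v) := Module.finrank_zero_iff.mp (hdim0 v hv)
          exact fun a b _ => Subsingleton.elim a b
        · intro a b hab
          have : (a : ME v) - b ∈ LinearMap.ker (p v) := by
            simp only [LinearMap.mem_ker, map_sub]
            simp only [hedef, LinearMap.comp_apply, Submodule.subtype_apply] at hab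
            rw [hab, sub_self]
          rw [hexact v] at this
          obtain ⟨z, hz⟩ := this
          have : Subsingleton (MS v) := hSsub v hv
          rw [Subsingleton.elim z 0, map_zero] at hz
          exact Subtype.ext (sub_eq_zero.mp hz.symm)
      · by_cases hv : v ∈ R₁
        · have : Subsingleton (MQ v) := hQsub v hv
          exact fun y => ⟨0, Subsingleton.elim _ _⟩
        · intro y
          obtain ⟨x, hx⟩ := hpsurj v y
          exact ⟨⟨x, by rw [hNtop' v hv]; trivial⟩, hx⟩
    set eqv : ∀ v, N v ≃ₗ[ℂ] MQ v := fun v => LinearEquiv.ofBijective (e v) (hbij v)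
      with heqvdef
    set σ : ∀ v, MQ v →ₗ[ℂ] ME v :=
      fun v => ((N v).subtype).comp ((eqv v).symm : MQ v →ₗ[ℂ] N v) with hσdef
    have heapp : ∀ v (z : N v), eqv v z = p v (z : ME v) := fun v z => rfl
    have hσapp : ∀ v (y : MQ v), σ v y = ((eqv v).symm y : ME v) := fun v y => rfl
    apply hnonsplit
    refine ⟨σ, ?_, ?_⟩
    · intro a x
      set z : N (s a) := (eqv (s a)).symm x with hz
      have hmem : ψE a (z : ME (s a)) ∈ N (t a) := hN a _ z.2
      have hw : eqv (t a) ⟨ψE a (z : ME (s a)), hmem⟩ = ψQ a x := by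
        rw [heapp]
        show p (t a) (ψE a (z : ME (s a))) = ψQ a x
        rw [hp a]
        congr 1
        have := (eqv (s a)).apply_symm_apply x
        rw [← hz] at this
        rw [← this, heapp]
      have hww : (eqv (t a)).symm (ψQ a x) = ⟨ψE a (z : ME (s a)), hmem⟩ := by
        rw [← hw, LinearEquiv.symm_apply_apply]
      rw [hσapp, hσapp, hww, ← hz]
    · intro v
      ext y
      simp only [LinearMap.comp_apply, LinearMap.id_apply]
      rw [hσapp]
      have h := (eqv v).apply_symm_apply y
      rw [heapp] at h
      exact h
  · -- R = R₁
    have hReq : R = R₁ := by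
      rw [← hRsplit, h1, h2, Finset.union_empty]
    rw [hReq]
    exact hθR₁
  · -- R = univ : contradiction
    exfalso
    apply hRnu
    rw [← hRsplit, h1, h2, Finset.union_compl]
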